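/- There exists a constant C > 0 such that for every integer n ≥ 3 and every infinite sequence 𝒢 = (G_1, G_2, …) of nonsplit communication graphs on n nodes, the dynamic radius of 𝒢 is at most C·log log n; that is, there exist a node i ∈ [n] and a time t ≤ C·log log n such that i is a broadcaster in the product graph G_1 ∘ G_2 ∘ ⋯ ∘ G_t. -/

import Mathlib

/-- `prodUpTo G t` is the product graph `G_1 ∘ G_2 ∘ ⋯ ∘ G_t`, where `G_r` is `G (r-1)`
(0-indexed sequence); the empty product (`t = 0`) has exactly the self-loops. -/
def prodUpTo {n : ℕ} (G : ℕ → Fin n → Fin n → Prop) : ℕ → Fin n → Fin n → Prop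
  | 0, i, j => i = j
  | t + 1, i, j => ∃ k, prodUpTo G t i k ∧ G t k j

namespace NonsplitAux

open Finset

/-- helper: `p * (q - r) = p*q - p*r` for naturals. -/
lemma nat_mul_sub (p q r : ℕ) : p * (q - r) = p * q - p * r := Nat.mul_sub p q r

/-- two-term binomial lower bound over ℕ. -/
lemma two_term : ∀ (q x y : ℕ), x ^ (q + 1) + (q + 1) * y * x ^ q ≤ (x + y) ^ (q + 1) := by
  intro q
  induction q with
  | zero => intro x y; simp [pow_succ]
  | succ q ih =>
    intro x y
    have h1 : (x + y) ^ (q + 2) = (x + y) ^ (q + 1) * (x + y) := by ring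
    have h2 : (x ^ (q + 1) + (q + 1) * y * x ^ q) * (x + y) ≤ (x + y) ^ (q + 1) * (x + y) :=
      Nat.mul_le_mul_right _ (ih x y)
    have h3 : x ^ (q + 2) + (q + 2) * y * x ^ (q + 1) + (q + 1) * y ^ 2 * x ^ q
        = (x ^ (q + 1) + (q + 1) * y * x ^ q) * (x + y) := by ring
    calc x ^ (q + 2) + (q + 2) * y * x ^ (q + 1)
        ≤ x ^ (q + 2) + (q + 2) * y * x ^ (q + 1) + (q + 1) * y ^ 2 * x ^ q := Nat.le_add_right _ _
      _ = (x ^ (q + 1) + (q + 1) * y * x ^ q) * (x + y) := h3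
      _ ≤ (x + y) ^ (q + 2) := by rw [h1]; exact h2

/-- `m^(m/a+1) ≥ 2*(m-a)^(m/a+1)` for `1 ≤ a ≤ m`. -/
lemma pow_budget {a m : ℕ} (ha : 1 ≤ a) (ham : a ≤ m) :
    2 * (m - a) ^ (m / a + 1) ≤ m ^ (m / a + 1) := by
  set q := m / a with hq
  have hxy : (m - a) + a = m := Nat.sub_add_cancel ham
  have hbin := NonsplitAux.two_term q (m - a) a
  rw [hxy] at hbin
  have hdm : a * q + m % a = m := Nat.div_add_mod m a
  have hma : m % a < a := Nat.mod_lt m (by omega)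
  have hexp : (q + 1) * a = a * q + a := by ring
  have hqa : m - a ≤ (q + 1) * a := by omega
  have hstep : (m - a) * (m - a) ^ q ≤ ((q + 1) * a) * (m - a) ^ q :=
    Nat.mul_le_mul_right _ hqa
  have h2 : 2 * (m - a) ^ (q + 1) = (m - a) ^ (q + 1) + (m - a) * (m - a) ^ q := by ring
  have h3 : ((q + 1) * a) * (m - a) ^ q = (q + 1) * a * (m - a) ^ q := by ring
  calc 2 * (m - a) ^ (q + 1) = (m - a) ^ (q + 1) + (m - a) * (m - a) ^ q := h2
    _ ≤ (m - a) ^ (q + 1) + (q + 1) * a * (m - a) ^ q := by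
        have := hstep; omega
    _ ≤ m ^ (q + 1) := hbin


/-- Budget: with `d = (m/a+1)*(Nat.log 2 n + 1)`, `n*(m-a)^d < m^d`. -/
lemma budget {a m n : ℕ} (ha : 1 ≤ a) (ham : a ≤ m) (hn : 1 ≤ n) :
    n * (m - a) ^ ((m / a + 1) * (Nat.log 2 n + 1)) < m ^ ((m / a + 1) * (Nat.log 2 n + 1)) := by
  set q := m / a + 1 with hqdef
  set L := Nat.log 2 n + 1 with hLdef
  have hm : 1 ≤ m := le_trans ha ham
  have hnL : n < 2 ^ L := Nat.lt_pow_succ_log_self (by norm_num) n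
  by_cases hae : a = m
  · -- m - a = 0, and d ≥ 1 so (m-a)^d = 0
    have hd : 0 < q * L := Nat.mul_pos (Nat.succ_pos _) (Nat.succ_pos _)
    have : (m - a) ^ (q * L) = 0 := by
      rw [hae, Nat.sub_self]
      exact zero_pow (by omega)
    rw [this, Nat.mul_zero]
    exact Nat.pow_pos (by omega)
  · have hma : 1 ≤ m - a := by omega
    have hkey : 2 * (m - a) ^ q ≤ m ^ q := pow_budget ha ham
    have h1 : (2 * (m - a) ^ q) ^ L ≤ (m ^ q) ^ L := Nat.pow_le_pow_left hkey L
    have h2 : (2 * (m - a) ^ q) ^ L = 2 ^ L * ((m - a) ^ q) ^ L := by rw [mul_pow]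
    have h3 : n * ((m - a) ^ q) ^ L < 2 ^ L * ((m - a) ^ q) ^ L := by
      apply Nat.mul_lt_mul_of_lt_of_le hnL (le_refl _)
      exact Nat.pow_pos (Nat.pow_pos hma)
    calc n * (m - a) ^ (q * L) = n * ((m - a) ^ q) ^ L := by rw [pow_mul]
      _ < 2 ^ L * ((m - a) ^ q) ^ L := h3
      _ = (2 * (m - a) ^ q) ^ L := h2.symm
      _ ≤ (m ^ q) ^ L := h1
      _ = m ^ (q * L) := by rw [pow_mul]


open Classical in
/-- Greedy hitting-set: if every set in the family has at least `a` elements (inside `S`),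
then any collection `U` of indices with `U.card * (m-a)^d < m^d` can be hit by `d` elements. -/
lemma hit_aux {n : ℕ} (S : Finset (Fin n)) (F : Fin n → Finset (Fin n)) (a : ℕ)
    (hFS : ∀ j, F j ⊆ S) (hFa : ∀ j, a ≤ (F j).card) (ha : 1 ≤ a) :
    ∀ (d : ℕ) (U : Finset (Fin n)), U.card * (S.card - a) ^ d < S.card ^ d →
      ∃ T ⊆ S, T.card ≤ d ∧ ∀ j ∈ U, ((F j) ∩ T).Nonempty := by
  intro d
  induction d with
  | zero =>
    intro U hU
    simp only [pow_zero, Nat.mul_one, Nat.lt_one_iff, Finset.card_eq_zero] at hU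
    exact ⟨∅, Finset.empty_subset S, le_refl 0, by simp [hU]⟩
  | succ d ih =>
    intro U hU
    rcases U.eq_empty_or_nonempty with hUe | hUne
    · exact ⟨∅, Finset.empty_subset S, Nat.zero_le _, by simp [hUe]⟩
    set m := S.card with hm
    set N := U.card with hN
    have hNpos : 0 < N := Finset.card_pos.mpr hUne
    have ham : a ≤ m := le_trans (hFa (Classical.choice (by
        rcases hUne with ⟨j, _⟩; exact ⟨j⟩ : Nonempty (Fin n))))
      (Finset.card_le_card (hFS _))
    have hmpos : 0 < m := lt_of_lt_of_le ha ham
    have hSne : S.Nonempty := Finset.card_pos.mp hmpos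
    -- double counting
    have hcount : N * a ≤ ∑ x ∈ S, (U.filter (fun j => x ∈ F j)).card := by
      have h1 : ∀ j ∈ U, (F j).card = ∑ x ∈ S, (if x ∈ F j then 1 else 0) := by
        intro j _
        have hset : S.filter (fun x => x ∈ F j) = F j := by
          rw [Finset.filter_mem_eq_inter]
          exact Finset.inter_eq_right.mpr (hFS j)
        calc (F j).card = (S.filter (fun x => x ∈ F j)).card := by rw [hset]
          _ = ∑ x ∈ S, (if x ∈ F j then 1 else 0) := Finset.card_filter _ _
      have h2 : ∑ j ∈ U, (F j).card = ∑ x ∈ S, (U.filter (fun j => x ∈ F j)).card := by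
        rw [Finset.sum_congr rfl h1, Finset.sum_comm]
        apply Finset.sum_congr rfl
        intro x _
        simpa using (Finset.card_filter (fun j => x ∈ F j) U).symm
      have h3 : N * a ≤ ∑ j ∈ U, (F j).card := by
        calc N * a = ∑ _j ∈ U, a := by rw [Finset.sum_const, smul_eq_mul]
          _ ≤ ∑ j ∈ U, (F j).card := Finset.sum_le_sum (fun j _ => hFa j)
      omega
    -- averaging: pick a popular x
    have hpop : ∃ x ∈ S, N * a ≤ m * (U.filter (fun j => x ∈ F j)).card := by
      by_contra hcon
      push_neg at hcon
      have hstrict : ∑ x ∈ S, m * (U.filter (fun j => x ∈ F j)).card < ∑ _x ∈ S, N * a :=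
        Finset.sum_lt_sum_of_nonempty hSne (fun x hx => hcon x hx)
      have hl : ∑ x ∈ S, m * (U.filter (fun j => x ∈ F j)).card
          = m * ∑ x ∈ S, (U.filter (fun j => x ∈ F j)).card := by
        rw [Finset.mul_sum]
      have hr : ∑ _x ∈ S, N * a = m * (N * a) := by
        rw [Finset.sum_const, smul_eq_mul]
      rw [hl, hr] at hstrict
      have := Nat.mul_le_mul_left m hcount
      omega
    obtain ⟨x, hxS, hx⟩ := hpop
    set U' := U.filter (fun j => x ∉ F j) with hU'
    have hsplit : (U.filter (fun j => x ∈ F j)).card + U'.card = N :=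
      Finset.card_filter_add_card_filter_not (fun j => x ∈ F j)
    -- m * U'.card ≤ N * (m - a)
    have hdec : m * U'.card ≤ N * (m - a) := by
      have h1 : m * U'.card = m * N - m * (U.filter (fun j => x ∈ F j)).card := by
        rw [← Nat.mul_sub]
        congr 1
        omega
      have h2 : m * N - m * (U.filter (fun j => x ∈ F j)).card ≤ m * N - N * a :=
        Nat.sub_le_sub_left hx _
      have h3 : N * (m - a) = N * m - N * a := Nat.mul_sub N m a
      have h4 : m * N = N * m := Nat.mul_comm m N
      omega
    -- verify hypothesis for U' at exponent d
    have hU'd : U'.card * (m - a) ^ d < m ^ d := by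
      have h5 : (U'.card * (m - a) ^ d) * m = (m * U'.card) * (m - a) ^ d := by ring
      have h6 : (m * U'.card) * (m - a) ^ d ≤ (N * (m - a)) * (m - a) ^ d :=
        Nat.mul_le_mul_right _ hdec
      have h7 : (N * (m - a)) * (m - a) ^ d = N * (m - a) ^ (d + 1) := by ring
      have h8 : (U'.card * (m - a) ^ d) * m < m ^ (d + 1) := by
        calc (U'.card * (m - a) ^ d) * m ≤ N * (m - a) ^ (d + 1) := by omega
          _ < m ^ (d + 1) := hU
      have h9 : m ^ (d + 1) = m ^ d * m := by ring
      rw [h9] at h8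
      exact Nat.lt_of_mul_lt_mul_right h8
    obtain ⟨T, hTS, hTcard, hThit⟩ := ih U' hU'd
    refine ⟨insert x T, ?_, ?_, ?_⟩
    · exact Finset.insert_subset hxS hTS
    · calc (insert x T).card ≤ T.card + 1 := Finset.card_insert_le x T
        _ ≤ d + 1 := by omega
    · intro j hjU
      by_cases hxj : x ∈ F j
      · exact ⟨x, Finset.mem_inter.mpr ⟨hxj, Finset.mem_insert_self x T⟩⟩
      · have hj' : j ∈ U' := Finset.mem_filter.mpr ⟨hjU, hxj⟩
        obtain ⟨y, hy⟩ := hThit j hj'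
        rw [Finset.mem_inter] at hy
        exact ⟨y, Finset.mem_inter.mpr ⟨hy.1, Finset.mem_insert_of_mem hy.2⟩⟩


section Graph

variable {n : ℕ} {G : ℕ → Fin n → Fin n → Prop}

open Classical in
/-- the kernel: in-neighborhood of `j` in the product of the first `t` graphs. -/
noncomputable def K (G : ℕ → Fin n → Fin n → Prop) (t : ℕ) (j : Fin n) : Finset (Fin n) :=
  Finset.univ.filter (fun i => prodUpTo G t i j)

open Classical in
lemma mem_K {t : ℕ} {i j : Fin n} : i ∈ K G t j ↔ prodUpTo G t i j := by
  simp [K]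

/-- `S` is a cover at time `t`: every node has heard from some member of `S`. -/
def Cover (G : ℕ → Fin n → Fin n → Prop) (t : ℕ) (S : Finset (Fin n)) : Prop :=
  ∀ j, ((K G t j) ∩ S).Nonempty

lemma prod_refl (hrefl : ∀ t i, G t i i) (t : ℕ) (i : Fin n) : prodUpTo G t i i := by
  induction t with
  | zero => rfl
  | succ t ih => exact ⟨i, ih, hrefl t i⟩

lemma K_mono (hrefl : ∀ t i, G t i i) (t : ℕ) (j : Fin n) : K G t j ⊆ K G (t + 1) j := by
  intro i hi
  rw [mem_K] at hi ⊢
  exact ⟨j, hi, hrefl t j⟩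

lemma cover_zero (hn : 0 < n) : Cover G 0 Finset.univ := by
  intro j
  exact ⟨j, Finset.mem_inter.mpr ⟨mem_K.mpr rfl, Finset.mem_univ j⟩⟩

lemma cover_succ (hrefl : ∀ t i, G t i i) {t : ℕ} {S : Finset (Fin n)}
    (h : Cover G t S) : Cover G (t + 1) S := by
  intro j
  obtain ⟨x, hx⟩ := h j
  rw [Finset.mem_inter] at hx
  exact ⟨x, Finset.mem_inter.mpr ⟨K_mono hrefl t j hx.1, hx.2⟩⟩

lemma cover_singleton_broadcast {t : ℕ} {i : Fin n} (h : Cover G t {i}) :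
    ∀ j, prodUpTo G t i j := by
  intro j
  obtain ⟨x, hx⟩ := h j
  rw [Finset.mem_inter, Finset.mem_singleton] at hx
  rw [← hx.2]
  exact mem_K.mp hx.1

/-- key structural fact: any two kernels at time `t+1` contain a common kernel of time `t`. -/
lemma witness (hns : ∀ t i j, ∃ k, G t k i ∧ G t k j) (t : ℕ) (j j' : Fin n) :
    ∃ k, K G t k ⊆ K G (t + 1) j ∧ K G t k ⊆ K G (t + 1) j' := by
  obtain ⟨k, hk1, hk2⟩ := hns t j j'
  refine ⟨k, ?_, ?_⟩ <;> intro i hi <;> rw [mem_K] at hi ⊢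
  · exact ⟨k, hi, hk1⟩
  · exact ⟨k, hi, hk2⟩

/-- pairwise intersection of traces on a cover. -/
lemma trace_pair (hns : ∀ t i j, ∃ k, G t k i ∧ G t k j) {t : ℕ} {S : Finset (Fin n)}
    (h : Cover G t S) (j j' : Fin n) :
    ((K G (t + 1) j ∩ S) ∩ (K G (t + 1) j' ∩ S)).Nonempty := by
  obtain ⟨k, hk1, hk2⟩ := witness hns t j j'
  obtain ⟨x, hx⟩ := h k
  rw [Finset.mem_inter] at hx
  exact ⟨x, by
    rw [Finset.mem_inter, Finset.mem_inter, Finset.mem_inter]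
    exact ⟨⟨hk1 hx.1, hx.2⟩, ⟨hk2 hx.1, hx.2⟩⟩⟩

/-- Step option (C): the minimal trace is a new (smaller) cover. -/
lemma step_min (hns : ∀ t i j, ∃ k, G t k i ∧ G t k j) (hn : 0 < n) {t : ℕ}
    {S : Finset (Fin n)} (h : Cover G t S) :
    ∃ S', Cover G (t + 1) S' ∧ ∀ j, S'.card ≤ (K G (t + 1) j ∩ S).card := by
  have hne : (Finset.univ : Finset (Fin n)).Nonempty := by
    exact ⟨⟨0, hn⟩, Finset.mem_univ _⟩
  obtain ⟨j₀, _, hj₀⟩ := Finset.exists_min_image Finset.univ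
    (fun j => (K G (t + 1) j ∩ S).card) hne
  refine ⟨K G (t + 1) j₀ ∩ S, ?_, fun j => hj₀ j (Finset.mem_univ j)⟩
  intro j
  obtain ⟨x, hx⟩ := trace_pair hns h j j₀
  rw [Finset.mem_inter] at hx
  obtain ⟨hx1, hx2⟩ := hx
  rw [Finset.mem_inter] at hx1
  exact ⟨x, Finset.mem_inter.mpr ⟨hx1.1, hx2⟩⟩

end Graph


section Steps

variable {n : ℕ} {G : ℕ → Fin n → Fin n → Prop}

/-- Uniform shrinking step: from a cover of size `m` to a cover of size
`(√m + 1) * (log₂ n + 1)` in one round. -/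
lemma step_uniform (hrefl : ∀ t i, G t i i) (hns : ∀ t i j, ∃ k, G t k i ∧ G t k j)
    (hn : 0 < n) {t : ℕ} {S : Finset (Fin n)} (h : Cover G t S) :
    ∃ S', Cover G (t + 1) S' ∧
      S'.card ≤ (Nat.sqrt S.card + 1) * (Nat.log 2 n + 1) := by
  set m := S.card with hm
  set s := Nat.sqrt m with hs
  set L := Nat.log 2 n + 1 with hL
  have hLpos : 1 ≤ L := Nat.succ_pos _
  -- the minimal trace size a
  obtain ⟨S₀, hS₀cov, hS₀min⟩ := step_min hns hn h
  set a := S₀.card with ha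
  have hcov1 : Cover G (t + 1) S := cover_succ hrefl h
  have hapos : 1 ≤ a := by
    have hj : Fin n := ⟨0, hn⟩
    obtain ⟨x, hx⟩ := hS₀cov hj
    rw [Finset.mem_inter] at hx
    have : S₀.Nonempty := ⟨x, hx.2⟩
    exact Finset.card_pos.mpr this
  by_cases hcase : a ≤ s
  · exact ⟨S₀, hS₀cov, le_trans hcase (by
      calc s ≤ s + 1 := Nat.le_succ s
        _ ≤ (s + 1) * L := Nat.le_mul_of_pos_right _ hLpos)⟩
  · -- all traces have size ≥ a ≥ s+1 : greedy hitting
    push_neg at hcase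
    have ham : a ≤ m := by
      have hj : Fin n := ⟨0, hn⟩
      calc a ≤ (K G (t + 1) hj ∩ S).card := hS₀min hj
        _ ≤ S.card := Finset.card_le_card (Finset.inter_subset_right)
    have hhit := hit_aux S (fun j => K G (t + 1) j ∩ S) a
      (fun j => Finset.inter_subset_right) (fun j => hS₀min j) hapos
      ((m / a + 1) * L) Finset.univ
      (by
        rw [Finset.card_univ, Fintype.card_fin]
        exact budget hapos ham hn)
    obtain ⟨T, hTS, hTcard, hThit⟩ := hhit
    refine ⟨T, ?_, ?_⟩
    · intro j
      obtain ⟨y, hy⟩ := hThit j (Finset.mem_univ j)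
      rw [Finset.mem_inter, Finset.mem_inter] at hy
      exact ⟨y, Finset.mem_inter.mpr ⟨hy.1.1, hy.2⟩⟩
    · -- (m/a + 1) ≤ s + 1 since a ≥ s+1
      have hdiv : m / a ≤ s := by
        have h1 : m / a ≤ m / (s + 1) := Nat.div_le_div_left hcase (Nat.succ_pos s)
        have h2 : m / (s + 1) < s + 1 := by
          rw [Nat.div_lt_iff_lt_mul (Nat.succ_pos s)]
          exact Nat.lt_succ_sqrt m
        omega
      calc T.card ≤ (m / a + 1) * L := hTcard
        _ ≤ (s + 1) * L := Nat.mul_le_mul_right _ (by omega)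

/-- Halving step, for the endgame. -/
lemma step_half (hrefl : ∀ t i, G t i i) (hns : ∀ t i j, ∃ k, G t k i ∧ G t k j)
    (hn : 0 < n) {t : ℕ} {S : Finset (Fin n)} (h : Cover G t S) (h2 : 2 ≤ S.card) :
    ∃ S', Cover G (t + 1) S' ∧ S'.card ≤ S.card / 2 + 1 := by
  set m := S.card with hm
  obtain ⟨S₀, hS₀cov, hS₀min⟩ := step_min hns hn h
  by_cases hcase : S₀.card ≤ m / 2 + 1
  · exact ⟨S₀, hS₀cov, hcase⟩
  · -- all traces have size > m/2 + 1 > m/2 ; any (m/2+1)-subset of S is a cover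
    push_neg at hcase
    obtain ⟨T, hTS, hTcard⟩ := Finset.exists_subset_card_eq (s := S) (n := m / 2 + 1) (by omega)
    refine ⟨T, ?_, le_of_eq hTcard⟩
    intro j
    -- trace of j and T both sit inside S with total size > m
    have htr : m / 2 + 1 ≤ (K G (t + 1) j ∩ S).card := le_trans (le_of_lt hcase) (hS₀min j)
    by_contra hemp
    rw [Finset.not_nonempty_iff_eq_empty] at hemp
    have hdisj : Disjoint (K G (t + 1) j ∩ S) T := by
      rw [Finset.disjoint_iff_inter_eq_empty]
      have : K G (t + 1) j ∩ T = (K G (t + 1) j ∩ S) ∩ T := by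
        rw [Finset.inter_assoc]
        congr 1
        exact (Finset.inter_eq_right.mpr hTS).symm
      rw [← this]
      exact hemp
    have hunion : (K G (t + 1) j ∩ S) ∪ T ⊆ S :=
      Finset.union_subset Finset.inter_subset_right hTS
    have hcard := Finset.card_le_card hunion
    rw [Finset.card_union_of_disjoint hdisj, hTcard] at hcard
    omega

/-- From a cover of size 2 to a singleton cover in one round. -/
lemma step_two (hrefl : ∀ t i, G t i i) (hns : ∀ t i j, ∃ k, G t k i ∧ G t k j)
    {t : ℕ} {S : Finset (Fin n)} (h : Cover G t S) (h2 : S.card = 2) :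
    ∃ i, Cover G (t + 1) {i} := by
  rw [Finset.card_eq_two] at h2
  obtain ⟨x, y, hxy, rfl⟩ := h2
  by_cases hx : ∀ j, x ∈ K G (t + 1) j
  · exact ⟨x, fun j => ⟨x, Finset.mem_inter.mpr ⟨hx j, Finset.mem_singleton_self x⟩⟩⟩
  · push_neg at hx
    obtain ⟨j₁, hj₁⟩ := hx
    refine ⟨y, fun j => ?_⟩
    obtain ⟨z, hz⟩ := trace_pair hns h j j₁
    rw [Finset.mem_inter] at hz
    obtain ⟨hz1, hz2⟩ := hz
    rw [Finset.mem_inter] at hz1 hz2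
    have hzy : z = y := by
      rcases Finset.mem_insert.mp hz2.2 with h' | h'
      · exact absurd (h' ▸ hz2.1) hj₁
      · exact Finset.mem_singleton.mp h'
    exact ⟨y, Finset.mem_inter.mpr ⟨hzy ▸ hz1.1, Finset.mem_singleton_self y⟩⟩

/-- Endgame: from a cover of size `≤ 2^r + 1` to a singleton cover in `r + 2` rounds. -/
lemma endgame (hrefl : ∀ t i, G t i i) (hns : ∀ t i j, ∃ k, G t k i ∧ G t k j)
    (hn : 0 < n) :
    ∀ (r t : ℕ) (S : Finset (Fin n)), Cover G t S → S.card ≤ 2 ^ r + 1 →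
      ∃ t' ≤ t + (r + 2), ∃ i, Cover G t' {i} := by
  intro r
  induction r with
  | zero =>
    intro t S hcov hcard
    have hSne : S.Nonempty := by
      have hj : Fin n := ⟨0, hn⟩
      obtain ⟨x, hx⟩ := hcov hj
      exact ⟨x, (Finset.mem_inter.mp hx).2⟩
    have h1 : 1 ≤ S.card := Finset.card_pos.mpr hSne
    interval_cases h : S.card
    · -- card = 1
      obtain ⟨i, rfl⟩ := Finset.card_eq_one.mp h
      exact ⟨t, by omega, i, hcov⟩
    · -- card = 2
      obtain ⟨i, hi⟩ := step_two hrefl hns hcov h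
      exact ⟨t + 1, by omega, i, hi⟩
  | succ r ih =>
    intro t S hcov hcard
    by_cases hsmall : S.card ≤ 2 ^ r + 1
    · obtain ⟨t', ht', i, hi⟩ := ih t S hcov hsmall
      exact ⟨t', by omega, i, hi⟩
    · push_neg at hsmall
      have h2 : 2 ≤ S.card := by
        have : 1 ≤ 2 ^ r := Nat.one_le_two_pow
        omega
      obtain ⟨S', hS'cov, hS'card⟩ := step_half hrefl hns hn hcov h2
      have hS'le : S'.card ≤ 2 ^ r + 1 := by
        have h3 : S.card / 2 ≤ (2 ^ (r + 1) + 1) / 2 := Nat.div_le_div_right hcard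
        have h4 : (2 ^ (r + 1) + 1) / 2 = 2 ^ r := by
          have : 2 ^ (r + 1) = 2 ^ r * 2 := by ring
          omega
        omega
      obtain ⟨t', ht', i, hi⟩ := ih (t + 1) S' hS'cov hS'le
      exact ⟨t', by omega, i, hi⟩

end Steps


section Assembly

variable {n : ℕ} {G : ℕ → Fin n → Fin n → Prop}

lemma log_step {m Λ : ℕ} (hm : 1 ≤ m) (hΛ : 1 ≤ Λ) :
    Nat.log 2 ((Nat.sqrt m + 1) * Λ) ≤ Nat.log 2 m / 2 + Nat.log 2 Λ + 1 := by
  set l := Nat.log 2 m with hl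
  set lam := Nat.log 2 Λ with hlam
  have h1 : m < 2 ^ (l + 1) := Nat.lt_pow_succ_log_self (by norm_num) m
  have h2 : Λ < 2 ^ (lam + 1) := Nat.lt_pow_succ_log_self (by norm_num) Λ
  have hsq : Nat.sqrt m < 2 ^ (l / 2 + 1) := by
    rw [Nat.sqrt_lt]
    calc m < 2 ^ (l + 1) := h1
      _ ≤ 2 ^ (l / 2 + 1 + (l / 2 + 1)) := Nat.pow_le_pow_right (by norm_num) (by omega)
      _ = 2 ^ (l / 2 + 1) * 2 ^ (l / 2 + 1) := by rw [pow_add]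
  have hprod : (Nat.sqrt m + 1) * Λ < 2 ^ (l / 2 + lam + 2) := by
    calc (Nat.sqrt m + 1) * Λ ≤ 2 ^ (l / 2 + 1) * Λ := Nat.mul_le_mul_right _ (by omega)
      _ < 2 ^ (l / 2 + 1) * 2 ^ (lam + 1) :=
          mul_lt_mul_of_pos_left h2 (Nat.pow_pos (by norm_num))
      _ = 2 ^ (l / 2 + lam + 2) := by rw [← pow_add]; congr 1; omega
  have hne : (Nat.sqrt m + 1) * Λ ≠ 0 := by positivity
  have := Nat.log_lt_of_lt_pow hne hprod
  omega

lemma phase1 (hrefl : ∀ t i, G t i i) (hns : ∀ t i j, ∃ k, G t k i ∧ G t k j)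
    (hn : 0 < n) :
    ∀ k, ∃ t ≤ k, ∃ S : Finset (Fin n), Cover G t S ∧
      Nat.log 2 S.card ≤ Nat.log 2 n / 2 ^ k + (2 * Nat.log 2 (Nat.log 2 n + 1) + 4) := by
  set lam := Nat.log 2 (Nat.log 2 n + 1) with hlam
  intro k
  induction k with
  | zero =>
    refine ⟨0, le_refl 0, Finset.univ, cover_zero hn, ?_⟩
    rw [Finset.card_univ, Fintype.card_fin, pow_zero, Nat.div_one]
    omega
  | succ k ih =>
    obtain ⟨t, ht, S, hcov, hlog⟩ := ih
    by_cases hcard : S.card ≤ 1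
    · refine ⟨t, by omega, S, hcov, ?_⟩
      have h0 : Nat.log 2 S.card = 0 := by
        apply Nat.log_eq_zero_iff.mpr
        left; omega
      rw [h0]
      exact Nat.zero_le _
    · push_neg at hcard
      have hm1 : 1 ≤ S.card := by omega
      obtain ⟨S', hS'cov, hS'card⟩ := step_uniform hrefl hns hn hcov
      refine ⟨t + 1, by omega, S', hS'cov, ?_⟩
      have hΛ : 1 ≤ Nat.log 2 n + 1 := Nat.succ_pos _
      have hb1 : Nat.log 2 S'.card ≤ Nat.log 2 ((Nat.sqrt S.card + 1) * (Nat.log 2 n + 1)) :=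
        Nat.log_mono_right hS'card
      have hb2 := log_step hm1 hΛ (m := S.card) (Λ := Nat.log 2 n + 1)
      have hb3 : Nat.log 2 S.card / 2
          ≤ (Nat.log 2 n / 2 ^ k + (2 * lam + 4)) / 2 := Nat.div_le_div_right hlog
      have hb4 : (Nat.log 2 n / 2 ^ k + (2 * lam + 4)) / 2
          = Nat.log 2 n / 2 ^ k / 2 + (lam + 2) := by
        have : (2 : ℕ) * lam + 4 = 2 * (lam + 2) := by ring
        rw [this, Nat.add_mul_div_left _ _ (by norm_num : (0:ℕ) < 2)]
      have hb5 : Nat.log 2 n / 2 ^ k / 2 = Nat.log 2 n / 2 ^ (k + 1) := by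
        rw [Nat.div_div_eq_div_mul, pow_succ]
      omega

lemma main_nat (hrefl : ∀ t i, G t i i) (hns : ∀ t i j, ∃ k, G t k i ∧ G t k j)
    (hn : 0 < n) :
    ∃ t ≤ 3 * Nat.log 2 (Nat.log 2 n + 1) + 8, ∃ i : Fin n, Cover G t {i} := by
  obtain ⟨t, ht, S, hcov, hlog⟩ := phase1 hrefl hns hn (Nat.log 2 (Nat.log 2 n) + 1)
  have hzero : Nat.log 2 n / 2 ^ (Nat.log 2 (Nat.log 2 n) + 1) = 0 :=
    Nat.div_eq_of_lt (Nat.lt_pow_succ_log_self (by norm_num) _)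
  rw [hzero, Nat.zero_add] at hlog
  have hcard : S.card ≤ 2 ^ (2 * Nat.log 2 (Nat.log 2 n + 1) + 4 + 1) + 1 := by
    have h1 : S.card < 2 ^ (Nat.log 2 S.card + 1) := Nat.lt_pow_succ_log_self (by norm_num) _
    have h2 : 2 ^ (Nat.log 2 S.card + 1) ≤ 2 ^ (2 * Nat.log 2 (Nat.log 2 n + 1) + 4 + 1) :=
      Nat.pow_le_pow_right (by norm_num) (by omega)
    omega
  obtain ⟨t', ht', i, hi⟩ := endgame hrefl hns hn
    (2 * Nat.log 2 (Nat.log 2 n + 1) + 4 + 1) t S hcov hcard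
  refine ⟨t', ?_, i, hi⟩
  have hmono : Nat.log 2 (Nat.log 2 n) ≤ Nat.log 2 (Nat.log 2 n + 1) :=
    Nat.log_mono_right (Nat.le_succ _)
  omega

end Assembly

end NonsplitAux

/-- There exists a constant `C > 0` such that for every `n ≥ 3` and every infinite sequence of
nonsplit communication graphs on `n` nodes, some node `i` is a broadcaster in the product of the
first `t` graphs for some `t ≤ C · log log n`. -/
theorem nonsplit_dynamic_radius_loglog :
    ∃ C : ℝ, 0 < C ∧
      ∀ n : ℕ, 3 ≤ n →
        ∀ G : ℕ → Fin n → Fin n → Prop,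
          (∀ t i, G t i i) →
          (∀ t i j, ∃ k, G t k i ∧ G t k j) →
          ∃ (i : Fin n) (t : ℕ), (t : ℝ) ≤ C * Real.log (Real.log n) ∧
            ∀ j : Fin n, prodUpTo G t i j := by
  have hln3 : (1:ℝ) < Real.log 3 := by
    rw [Real.lt_log_iff_exp_lt (by norm_num : (0:ℝ) < 3)]
    calc Real.exp 1 < 2.7182818286 := Real.exp_one_lt_d9
      _ < 3 := by norm_num
  set ε := Real.log (Real.log 3) with hεdef
  have hεpos : 0 < ε := Real.log_pos hln3
  set α := 6 * Real.log 3 + 8 with hαdef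
  have hαpos : 0 < α := by
    have : (0:ℝ) < Real.log 3 := by linarith
    linarith
  refine ⟨α / ε + 6, by positivity, ?_⟩
  intro n hn G hrefl hns
  obtain ⟨t, ht, i, hi⟩ := NonsplitAux.main_nat (G := G) hrefl hns (by omega)
  refine ⟨i, t, ?_, NonsplitAux.cover_singleton_broadcast hi⟩
  -- real-number estimates
  have hn3 : (3:ℝ) ≤ (n:ℝ) := by exact_mod_cast hn
  have hlog3n : Real.log 3 ≤ Real.log n := Real.log_le_log (by norm_num) hn3
  have hlogn1 : (1:ℝ) ≤ Real.log n := le_trans (le_of_lt hln3) hlog3n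
  have hlognpos : (0:ℝ) < Real.log n := by linarith
  have hhalf : (1:ℝ)/2 ≤ Real.log 2 := by
    have := Real.log_two_gt_d9; linarith
  -- Nat.log 2 n ≤ 2 log n
  have hnne : n ≠ 0 := by omega
  have hpowle : ((2:ℝ)) ^ (Nat.log 2 n) ≤ (n:ℝ) := by
    exact_mod_cast Nat.pow_log_le_self 2 hnne
  have hL1 : (Nat.log 2 n : ℝ) * Real.log 2 ≤ Real.log n := by
    calc (Nat.log 2 n : ℝ) * Real.log 2 = Real.log ((2:ℝ) ^ (Nat.log 2 n)) :=
          (Real.log_pow _ _).symm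
      _ ≤ Real.log n := Real.log_le_log (by positivity) hpowle
  have hLnonneg : (0:ℝ) ≤ (Nat.log 2 n : ℝ) := Nat.cast_nonneg _
  have hL2 : (Nat.log 2 n : ℝ) ≤ 2 * Real.log n := by
    have h1 : (Nat.log 2 n : ℝ) * (1/2) ≤ (Nat.log 2 n : ℝ) * Real.log 2 :=
      mul_le_mul_of_nonneg_left hhalf hLnonneg
    linarith
  -- log (Nat.log 2 n + 1) ≤ log 3 + log log n
  have hMne : Nat.log 2 n + 1 ≠ 0 := Nat.succ_ne_zero _
  have hpowle2 : ((2:ℝ)) ^ (Nat.log 2 (Nat.log 2 n + 1)) ≤ ((Nat.log 2 n + 1 : ℕ) : ℝ) := by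
    exact_mod_cast Nat.pow_log_le_self 2 hMne
  have hlam1 : (Nat.log 2 (Nat.log 2 n + 1) : ℝ) * Real.log 2
      ≤ Real.log ((Nat.log 2 n + 1 : ℕ) : ℝ) := by
    calc (Nat.log 2 (Nat.log 2 n + 1) : ℝ) * Real.log 2
        = Real.log ((2:ℝ) ^ (Nat.log 2 (Nat.log 2 n + 1))) := (Real.log_pow _ _).symm
      _ ≤ _ := Real.log_le_log (by positivity) hpowle2
  have hM : ((Nat.log 2 n + 1 : ℕ) : ℝ) ≤ 3 * Real.log n := by
    push_cast
    linarith
  have hMcast : (0:ℝ) < ((Nat.log 2 n + 1 : ℕ) : ℝ) := by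
    exact_mod_cast Nat.succ_pos (Nat.log 2 n)
  have hlam2 : Real.log ((Nat.log 2 n + 1 : ℕ) : ℝ) ≤ Real.log (3 * Real.log n) :=
    Real.log_le_log hMcast hM
  have hsplit : Real.log (3 * Real.log n) = Real.log 3 + Real.log (Real.log n) :=
    Real.log_mul (by norm_num) (ne_of_gt hlognpos)
  have hllpos : ε ≤ Real.log (Real.log n) := Real.log_le_log (by linarith) hlog3n
  have hllnonneg : (0:ℝ) < Real.log (Real.log n) := lt_of_lt_of_le hεpos hllpos
  have hlamnonneg : (0:ℝ) ≤ (Nat.log 2 (Nat.log 2 n + 1) : ℝ) := Nat.cast_nonneg _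
  have hlam3 : (Nat.log 2 (Nat.log 2 n + 1) : ℝ)
      ≤ 2 * (Real.log 3 + Real.log (Real.log n)) := by
    have h1 : (Nat.log 2 (Nat.log 2 n + 1) : ℝ) * (1/2)
        ≤ (Nat.log 2 (Nat.log 2 n + 1) : ℝ) * Real.log 2 :=
      mul_le_mul_of_nonneg_left hhalf hlamnonneg
    have h2 := le_trans hlam1 (le_trans hlam2 (le_of_eq hsplit))
    linarith
  -- put it together
  have htR : (t:ℝ) ≤ 3 * (Nat.log 2 (Nat.log 2 n + 1) : ℝ) + 8 := by
    have : (t:ℝ) ≤ ((3 * Nat.log 2 (Nat.log 2 n + 1) + 8 : ℕ) : ℝ) := by exact_mod_cast ht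
    push_cast at this
    linarith
  have hbound : (t:ℝ) ≤ α + 6 * Real.log (Real.log n) := by
    have h3 : (0:ℝ) < Real.log 3 := by linarith
    linarith
  have hkey : α ≤ α / ε * Real.log (Real.log n) := by
    have h1 : α / ε * ε ≤ α / ε * Real.log (Real.log n) :=
      mul_le_mul_of_nonneg_left hllpos (by positivity)
    rw [div_mul_cancel₀ α (ne_of_gt hεpos)] at h1
    exact h1
  calc (t:ℝ) ≤ α + 6 * Real.log (Real.log n) := hbound
    _ ≤ α / ε * Real.log (Real.log n) + 6 * Real.log (Real.log n) := by linarith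
    _ = (α / ε + 6) * Real.log (Real.log n) := by ring
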